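/- arXiv:2410.12966 — 8 statements merged into one kernel-verified Lean document; each statement's English description precedes it below -/
import Mathlib

section
/- Every fair division instance with additive valuations and positive entitlements in which no item is a chore (i.e., every item j satisfies v_i(j) ≥ 0 for some agent i, so each item is a good or neutral, though goods need not be pure) admits a WEF1 allocation. -/
open Finset

/-- Value of a bundle under an additive valuation. -/
noncomputable def bundleVal {ι : Type*} (v : ι → ℝ) (S : Finset ι) : ℝ := ∑ t ∈ S, v t

/-- Agent with valuation `v` and entitlement `wi` WEF1-envies the agent with
entitlement `wj`, given bundles `Ai` and `Aj`. -/
def WEF1Envies {ι : Type*} [DecidableEq ι] (v : ι → ℝ) (wi wj : ℝ)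
    (Ai Aj : Finset ι) : Prop :=
  bundleVal v Ai / wi < bundleVal v Aj / wj ∧
  (∀ g ∈ Aj, bundleVal v Ai / wi < bundleVal v (Aj.erase g) / wj) ∧
  (∀ c ∈ Ai, bundleVal v (Ai.erase c) / wi < bundleVal v Aj / wj)

private lemma wef1_key1 {A wj γ xi : ℝ} (h0 : 0 ≤ γ) (h1 : γ ≤ xi) (h2 : 0 ≤ wj) :
    max (A + wj) 0 * γ ≤ wj * γ + max A 0 * xi := by
  have hA : 0 ≤ max A 0 := le_max_right _ _
  have hm : max (A + wj) 0 ≤ max A 0 + wj :=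
    max_le (by linarith [le_max_left A 0]) (by linarith)
  calc max (A + wj) 0 * γ ≤ (max A 0 + wj) * γ := mul_le_mul_of_nonneg_right hm h0
    _ = max A 0 * γ + wj * γ := by ring
    _ ≤ max A 0 * xi + wj * γ := by nlinarith
    _ = wj * γ + max A 0 * xi := by ring

private lemma wef1_aux {n : ℕ} {ι : Type*} [Fintype ι] [DecidableEq ι]
    (v : Fin n → ι → ℝ) (w : Fin n → ℝ) (hw : ∀ i, 0 < w i)
    (hnochore : ∀ j : ι, ∃ i, 0 ≤ v i j) :
    ∀ (N : ℕ) (R : Finset ι), R.card ≤ N → ∀ (p : Fin n → ℕ) (x : Fin n → ℝ),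
      (∀ i, 0 ≤ x i) → (∀ i, ∀ h ∈ R, v i h ≤ x i) →
      ∃ B : Fin n → Finset ι,
        (∀ i, B i ⊆ R) ∧
        (∀ h ∈ R, ∃! i, h ∈ B i) ∧
        (∀ i, ∀ a ∈ B i, 0 ≤ v i a) ∧
        (∀ i j, i ≠ j → 1 ≤ p j →
          w i * ∑ g ∈ B j, max (v i g) 0 ≤
            w j * ∑ a ∈ B i, v i a
              + max (w j * (p i : ℝ) - w i * ((p j : ℝ) - 1)) 0 * x i) ∧
        (∀ i j, i ≠ j → p j = 0 → B j = ∅ ∨ ∃ g ∈ B j,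
          w i * ∑ h ∈ (B j).erase g, max (v i h) 0 ≤
            w j * ∑ a ∈ B i, v i a + w j * (p i : ℝ) * x i) := by
  classical
  intro N
  induction N with
  | zero =>
    intro R hR p x hx0 hxR
    have hRe : R = ∅ := Finset.card_eq_zero.mp (Nat.le_zero.mp hR)
    subst hRe
    refine ⟨fun _ => ∅, fun _ => Finset.empty_subset _, by simp, by simp, ?_, ?_⟩
    · intro i j hij hpj
      simp only [Finset.sum_empty, mul_zero, zero_add]
      exact mul_nonneg (le_max_right _ _) (hx0 i)
    · intro i j hij hpj
      exact Or.inl rfl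
  | succ N ih =>
    intro R hR p x hx0 hxR
    rcases eq_or_ne R ∅ with rfl | hRne
    · exact ih ∅ (by simp) p x hx0 hxR
    have hRne' : R.Nonempty := Finset.nonempty_iff_ne_empty.mpr hRne
    set Act : Finset (Fin n) := Finset.univ.filter (fun i => ∃ h ∈ R, 0 ≤ v i h) with hAct
    have hActne : Act.Nonempty := by
      obtain ⟨h0, hh0⟩ := hRne'
      obtain ⟨i0, hi0⟩ := hnochore h0
      refine ⟨i0, ?_⟩
      simp only [hAct, Finset.mem_filter, Finset.mem_univ, true_and]
      exact ⟨h0, hh0, hi0⟩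
    obtain ⟨istar, histar, hmin⟩ := Act.exists_min_image (fun i => (p i : ℝ) / w i) hActne
    obtain ⟨gstar, hgstar, hmax⟩ := R.exists_max_image (v istar) hRne'
    have hγ0 : 0 ≤ v istar gstar := by
      simp only [hAct, Finset.mem_filter, Finset.mem_univ, true_and] at histar
      obtain ⟨h1, hh1, hv1⟩ := histar
      exact hv1.trans (hmax h1 hh1)
    have hγx : v istar gstar ≤ x istar := hxR istar gstar hgstar
    set R' := R.erase gstar with hR'
    have hcard : R'.card ≤ N := by
      rw [hR', Finset.card_erase_of_mem hgstar]
      have h2 := Finset.card_pos.mpr hRne'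
      omega
    set p' : Fin n → ℕ := fun i => if i = istar then p i + 1 else p i with hp'
    set x' : Fin n → ℝ := fun i => if i = istar then v istar gstar else x i with hx'
    have hx0' : ∀ i, 0 ≤ x' i := by
      intro i; by_cases hi : i = istar <;> simp [hx', hi, hγ0, hx0 i]
    have hxR' : ∀ i, ∀ h ∈ R', v i h ≤ x' i := by
      intro i h hh
      by_cases hi : i = istar
      · subst hi; simpa [hx'] using hmax h (Finset.mem_of_mem_erase hh)
      · simpa [hx', hi] using hxR i h (Finset.mem_of_mem_erase hh)
    obtain ⟨B', hB1, hB2, hB3, hB4, hB5⟩ := ih R' hcard p' x' hx0' hxR'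
    set B : Fin n → Finset ι := fun i => if i = istar then insert gstar (B' istar) else B' i
      with hB
    have hgnotin : ∀ i, gstar ∉ B' i := fun i hmem =>
      (Finset.notMem_erase gstar R) (hB1 i hmem)
    have hBsub : ∀ i, B i ⊆ R := by
      intro i
      by_cases hi : i = istar
      · simp only [hB, hi, if_pos rfl]
        exact Finset.insert_subset hgstar ((hB1 istar).trans (Finset.erase_subset _ _))
      · simp only [hB, if_neg hi]
        exact (hB1 i).trans (Finset.erase_subset _ _)
    refine ⟨B, hBsub, ?_, ?_, ?_, ?_⟩
    · -- partition
      intro h hh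
      by_cases hhg : h = gstar
      · subst hhg
        refine ⟨istar, by simp [hB], ?_⟩
        intro k hk
        by_cases hk' : k = istar
        · exact hk'
        · simp only [hB, if_neg hk'] at hk
          exact absurd hk (hgnotin k)
      · obtain ⟨i1, hi1, huniq⟩ := hB2 h (Finset.mem_erase.mpr ⟨hhg, hh⟩)
        refine ⟨i1, ?_, ?_⟩
        · by_cases hi : i1 = istar
          · subst hi; simp only [hB, if_pos rfl]; exact Finset.mem_insert_of_mem hi1
          · simpa [hB, hi] using hi1
        · intro k hk
          apply huniq
          by_cases hk' : k = istar
          · subst hk'; simp only [hB, if_pos rfl, Finset.mem_insert] at hk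
            rcases hk with h1 | h1
            · exact absurd h1 hhg
            · exact h1
          · simpa [hB, hk'] using hk
    · -- own values nonneg
      intro i a ha
      by_cases hi : i = istar
      · subst hi; simp only [hB, if_pos rfl, Finset.mem_insert] at ha
        rcases ha with rfl | ha
        · exact hγ0
        · exact hB3 i a ha
      · simp only [hB, if_neg hi] at ha
        exact hB3 i a ha
    · -- B4
      intro i j hij hpj
      have hijne : j ≠ istar ∨ i ≠ istar := by
        by_cases h : i = istar
        · exact Or.inl (by rw [h] at hij; exact fun hh => hij hh.symm)
        · exact Or.inr h
      by_cases hi : i = istar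
      · -- Case B: i = istar picks
        subst hi
        have hjne : j ≠ i := fun h => hij h.symm
        have hrec := hB4 i j hij (by simpa [hp', hjne] using hpj)
        simp only [hp', hx', if_pos rfl, if_neg hjne] at hrec
        simp only [hB, if_pos rfl, if_neg hjne]
        rw [Finset.sum_insert (hgnotin i)]
        push_cast at hrec
        have hA : w j * ((p i : ℝ) + 1) - w i * ((p j : ℝ) - 1)
            = (w j * (p i : ℝ) - w i * ((p j : ℝ) - 1)) + w j := by ring
        rw [hA] at hrec
        have hkey := wef1_key1 (A := w j * (p i : ℝ) - w i * ((p j : ℝ) - 1))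
          hγ0 hγx (hw j).le
        linarith
      · by_cases hj : j = istar
        · -- Case C: j = istar picks
          subst hj
          have hrec := hB4 i j hij (by simp [hp'])
          simp only [hp', hx', if_pos rfl, if_neg hi] at hrec
          simp only [hB, if_pos rfl, if_neg hi]
          rw [Finset.sum_insert (hgnotin j)]
          push_cast at hrec
          have hA : w j * (p i : ℝ) - w i * ((p j : ℝ) + 1 - 1)
              = w j * (p i : ℝ) - w i * (p j : ℝ) := by ring
          rw [hA] at hrec
          have hgoalA : w j * (p i : ℝ) - w i * ((p j : ℝ) - 1)
              = (w j * (p i : ℝ) - w i * (p j : ℝ)) + w i := by ring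
          rw [hgoalA]
          set a := w j * (p i : ℝ) - w i * (p j : ℝ) with ha
          by_cases hact : i ∈ Act
          · have hle : (p j : ℝ) / w j ≤ (p i : ℝ) / w i := hmin i hact
            have ha0 : 0 ≤ a := by
              rw [div_le_div_iff₀ (hw j) (hw i)] at hle
              simp only [ha]; nlinarith
            have hcap : max (v i gstar) 0 ≤ x i := max_le (hxR i gstar hgstar) (hx0 i)
            rw [max_eq_left ha0] at hrec
            rw [max_eq_left (show (0:ℝ) ≤ a + w i by linarith [(hw i).le, hw i])]
            have h2 : w i * max (v i gstar) 0 ≤ w i * x i :=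
              mul_le_mul_of_nonneg_left hcap (hw i).le
            nlinarith
          · have hneg : v i gstar < 0 := by
              by_contra hcon
              exact hact (by
                simp only [hAct, Finset.mem_filter, Finset.mem_univ, true_and]
                exact ⟨gstar, hgstar, not_lt.mp hcon⟩)
            rw [max_eq_right hneg.le]
            have hmm : max a 0 ≤ max (a + w i) 0 :=
              max_le_max (by linarith [hw i]) le_rfl
            have h2 : max a 0 * x i ≤ max (a + w i) 0 * x i :=
              mul_le_mul_of_nonneg_right hmm (hx0 i)
            linarith
        · -- Case A: third party
          have hrec := hB4 i j hij (by simpa [hp', hj] using hpj)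
          simp only [hp', hx', if_neg hi, if_neg hj] at hrec
          simpa [hB, if_neg hi, if_neg hj] using hrec
    · -- B5
      intro i j hij hpj0
      by_cases hi : i = istar
      · subst hi
        have hjne : j ≠ i := fun h => hij h.symm
        rcases hB5 i j hij (by simpa [hp', hjne] using hpj0) with hBe | ⟨g, hg, hineq⟩
        · exact Or.inl (by simpa [hB, hjne] using hBe)
        · refine Or.inr ⟨g, by simpa [hB, hjne] using hg, ?_⟩
          simp only [hp', hx', if_pos rfl, if_neg hjne] at hineq
          simp only [hB, if_pos rfl, if_neg hjne]
          rw [Finset.sum_insert (hgnotin i)]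
          push_cast at hineq
          have hh : w j * (p i : ℝ) * v i gstar ≤ w j * (p i : ℝ) * x i :=
            mul_le_mul_of_nonneg_left hγx
              (mul_nonneg (hw j).le (Nat.cast_nonneg _))
          nlinarith [hineq]
      · by_cases hj : j = istar
        · subst hj
          refine Or.inr ⟨gstar, by simp [hB], ?_⟩
          have hrec := hB4 i j hij (by simp [hp'])
          simp only [hp', hx', if_pos rfl, if_neg hi] at hrec
          simp only [hB, if_pos rfl, if_neg hi]
          rw [Finset.erase_insert (hgnotin j)]
          push_cast at hrec
          simp only [hpj0, Nat.cast_zero] at hrec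
          have hA : w j * (p i : ℝ) - w i * ((0 : ℝ) + 1 - 1)
              = w j * (p i : ℝ) := by ring
          rw [hA] at hrec
          rw [max_eq_left (mul_nonneg (hw j).le (Nat.cast_nonneg _))] at hrec
          exact hrec
        · rcases hB5 i j hij (by simpa [hp', hj] using hpj0) with hBe | ⟨g, hg, hineq⟩
          · exact Or.inl (by simpa [hB, hj] using hBe)
          · refine Or.inr ⟨g, by simpa [hB, hj] using hg, ?_⟩
            simp only [hp', hx', if_neg hi, if_neg hj] at hineq
            simpa [hB, if_neg hi, if_neg hj] using hineq

/-- Every fair division instance with additive valuations, positive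
entitlements, and no chores (every item has nonnegative value to some agent)
admits a WEF1 allocation. -/
theorem wef1_exists_no_chores
    {n : ℕ} {ι : Type*} [Fintype ι] [DecidableEq ι] (hn : 0 < n)
    (v : Fin n → ι → ℝ) (w : Fin n → ℝ) (hw : ∀ i, 0 < w i)
    (hnochore : ∀ j : ι, ∃ i, 0 ≤ v i j) :
    ∃ A : Fin n → Finset ι,
      (∀ j : ι, ∃! i, j ∈ A i) ∧
      ∀ i j, i ≠ j → ¬ WEF1Envies (v i) (w i) (w j) (A i) (A j) := by
  classical
  obtain ⟨B, hB1, hB2, hB3, hB4, hB5⟩ :=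
    wef1_aux v w hw hnochore (Finset.univ.card) Finset.univ le_rfl
      (fun _ => 0) (fun i => ∑ h, |v i h|)
      (fun i => Finset.sum_nonneg fun h _ => abs_nonneg _)
      (fun i h _ => (le_abs_self _).trans
        (Finset.single_le_sum (f := fun h' => |v i h'|) (fun h' _ => abs_nonneg _) (Finset.mem_univ h)))
  refine ⟨B, fun j => hB2 j (Finset.mem_univ j), ?_⟩
  intro i j hij henv
  obtain ⟨h1, h2, h3⟩ := henv
  rcases hB5 i j hij rfl with hBj | ⟨g, hg, hineq⟩
  · rw [hBj] at h1
    have h0 : (0:ℝ) ≤ bundleVal (v i) (B i) :=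
      Finset.sum_nonneg fun a ha => hB3 i a ha
    have hz : bundleVal (v i) (∅ : Finset ι) = 0 := by simp [bundleVal]
    rw [hz, zero_div] at h1
    have := div_nonneg h0 (hw i).le
    linarith
  · have hlt := h2 g hg
    have hsum : bundleVal (v i) ((B j).erase g) ≤ ∑ h ∈ (B j).erase g, max (v i h) 0 :=
      Finset.sum_le_sum fun h _ => le_max_left _ _
    simp only [Nat.cast_zero, mul_zero, zero_mul, add_zero] at hineq
    have hdiv : bundleVal (v i) ((B j).erase g) / w j ≤ bundleVal (v i) (B i) / w i := by
      rw [div_le_div_iff₀ (hw j) (hw i)]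
      have hmul : w i * bundleVal (v i) ((B j).erase g) ≤ w j * bundleVal (v i) (B i) := by
        calc w i * bundleVal (v i) ((B j).erase g)
            ≤ w i * ∑ h ∈ (B j).erase g, max (v i h) 0 :=
              mul_le_mul_of_nonneg_left hsum (hw i).le
          _ ≤ w j * ∑ a ∈ B i, v i a := hineq
          _ = w j * bundleVal (v i) (B i) := rfl
      nlinarith [hmul]
    exact absurd hlt (not_lt.mpr hdiv)
end

section
/- Fix ε with 0 < ε < 1. Consider two agents with entitlements w = (2, 3) and three items: a chore c and two goods g_1, g_2, with valuations v_1(c) = −(1−ε), v_2(c) = −(1+ε), and v_1(g_1) = v_1(g_2) = v_2(g_1) = v_2(g_2) = 1. Then every allocation of the three items in which agent 2 receives the chore c fails to be WEF1. (Hence a WEF1 allocation of the chores alone—giving c to agent 2 is WEF1 for the chores-only sub-instance—cannot always be extended to a WEF1 allocation of the mixed instance.) -/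
open Finset

/-- Two agents with entitlements (2,3); items: chore `c = 0` and goods
`g₁ = 1`, `g₂ = 2`. Any allocation giving the chore to agent 2 (index 1)
fails to be WEF1. -/
theorem chore_allocation_not_extendable
    (ε : ℝ) (hε0 : 0 < ε) (hε1 : ε < 1) :
    let v : Fin 2 → Fin 3 → ℝ := fun i j =>
      if j = 0 then (if i = 0 then -(1 - ε) else -(1 + ε)) else 1
    let w : Fin 2 → ℝ := ![2, 3]
    ∀ A : Fin 2 → Finset (Fin 3),
      (∀ j : Fin 3, ∃! i, j ∈ A i) →
      (0 : Fin 3) ∈ A 1 →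
      ∃ i j : Fin 2, i ≠ j ∧ WEF1Envies (v i) (w i) (w j) (A i) (A j) := by
  intro v w A huniq h0
  have key : ∀ j : Fin 3, (j ∈ A 0 ↔ j ∉ A 1) := by
    intro j
    obtain ⟨i, hi, hu⟩ := huniq j
    constructor
    · intro ha hb
      have e0 := hu 0 ha
      have e1 := hu 1 hb
      rw [← e1] at e0
      exact absurd e0 (by decide)
    · intro hb
      fin_cases i
      · exact hi
      · exact absurd hi hb
  have h0c : (0 : Fin 3) ∉ A 0 := fun h => ((key 0).mp h) h0
  by_cases h1 : (1 : Fin 3) ∈ A 1 <;> by_cases h2 : (2 : Fin 3) ∈ A 1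
  · -- A1 = {0,1,2}, A0 = ∅ : agent 0 envies agent 1
    have hA1 : A 1 = {0, 1, 2} := by
      ext j; fin_cases j <;> simp [h0, h1, h2]
    have hA0 : A 0 = ∅ := by
      ext j; fin_cases j <;> simp [h0c]
      · exact fun h => ((key 1).mp h) h1
      · exact fun h => ((key 2).mp h) h2
    refine ⟨0, 1, by decide, ?_⟩
    rw [WEF1Envies, hA0, hA1]
    simp [bundleVal, v, w, Finset.sum_insert, Fin.forall_fin_succ]
    constructor <;> linarith
  · -- A1 = {0,1}, A0 = {2} : agent 1 envies agent 0
    have hA1 : A 1 = {0, 1} := by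
      ext j; fin_cases j <;> simp [h0, h1, h2]
    have hA0 : A 0 = {2} := by
      ext j; fin_cases j <;> simp [h0c]
      · exact fun h => ((key 1).mp h) h1
      · exact (key 2).mpr h2
    refine ⟨1, 0, by decide, ?_⟩
    rw [WEF1Envies, hA0, hA1]
    simp [bundleVal, v, w, Finset.sum_insert, Fin.forall_fin_succ]
    refine ⟨by linarith, by linarith, by linarith, by linarith⟩
  · -- A1 = {0,2}, A0 = {1} : agent 1 envies agent 0
    have hA1 : A 1 = {0, 2} := by
      ext j; fin_cases j <;> simp [h0, h1, h2]
    have hA0 : A 0 = {1} := by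
      ext j; fin_cases j <;> simp [h0c]
      · exact (key 1).mpr h1
      · exact fun h => ((key 2).mp h) h2
    refine ⟨1, 0, by decide, ?_⟩
    rw [WEF1Envies, hA0, hA1]
    simp [bundleVal, v, w, Finset.sum_insert, Fin.forall_fin_succ]
    refine ⟨by linarith, by linarith, by linarith, by linarith⟩
  · -- A1 = {0}, A0 = {1,2} : agent 1 envies agent 0
    have hA1 : A 1 = {0} := by
      ext j; fin_cases j <;> simp [h0, h1, h2]
    have hA0 : A 0 = {1, 2} := by
      ext j; fin_cases j <;> simp [h0c]
      · exact (key 1).mpr h1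
      · exact (key 2).mpr h2
    refine ⟨1, 0, by decide, ?_⟩
    rw [WEF1Envies, hA0, hA1]
    simp [bundleVal, v, w, Finset.sum_insert, Fin.forall_fin_succ]
    constructor <;> linarith
end

section
/- Let (A, p) be an integral market equilibrium for a fair division instance with additive valuations and positive entitlements. If agent i WEF1-envies agent j in the allocation A, then agent i pWEF1-envies agent j in (A, p). -/
open Finset

/-- `(A, p)` is an integral market equilibrium. -/
def IntMarketEq {n : ℕ} {ι : Type*}
    (v : Fin n → ι → ℝ) (A : Fin n → Finset ι) (p : ι → ℝ) : Prop :=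
  (∀ j : ι, (∃ i, 0 < v i j) → 0 < p j) ∧
  (∀ j : ι, (∀ i, v i j < 0) → p j < 0) ∧
  (∀ j : ι, ((∀ i, v i j ≤ 0) ∧ (∃ i, v i j = 0)) → p j = 0) ∧
  (∀ i, ∃ α : ℝ, 0 < α ∧ (∀ j : ι, v i j ≤ α * p j) ∧ (∀ j ∈ A i, v i j = α * p j))

/-- In an integral market equilibrium, WEF1-envy implies pWEF1-envy. -/
theorem wef1_envy_implies_pwef1_envy
    {n : ℕ} {ι : Type*} [Fintype ι] [DecidableEq ι]
    (v : Fin n → ι → ℝ) (A : Fin n → Finset ι) (p : ι → ℝ)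
    (w : Fin n → ℝ) (hw : ∀ i, 0 < w i)
    (hpart : ∀ j : ι, ∃! i, j ∈ A i)
    (hme : IntMarketEq v A p)
    (i j : Fin n)
    (henvy : WEF1Envies (v i) (w i) (w j) (A i) (A j)) :
    WEF1Envies p (w i) (w j) (A i) (A j) := by
  obtain ⟨α, hα, hle, heq⟩ := hme.2.2.2 i
  have hEq : ∀ S : Finset ι, S ⊆ A i → bundleVal (v i) S = α * bundleVal p S := by
    intro S hS
    rw [bundleVal, bundleVal, Finset.mul_sum]
    exact Finset.sum_congr rfl fun t ht => heq t (hS ht)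
  have hSle : ∀ S : Finset ι, bundleVal (v i) S ≤ α * bundleVal p S := by
    intro S
    rw [bundleVal, bundleVal, Finset.mul_sum]
    exact Finset.sum_le_sum fun t _ => hle t
  have key : ∀ S T : Finset ι, S ⊆ A i →
      bundleVal (v i) S / w i < bundleVal (v i) T / w j →
      bundleVal p S / w i < bundleVal p T / w j := by
    intro S T hS h
    have h1 : α * (bundleVal p S / w i) < α * (bundleVal p T / w j) := by
      calc α * (bundleVal p S / w i) = (α * bundleVal p S) / w i := by ring
        _ = bundleVal (v i) S / w i := by rw [hEq S hS]
        _ < bundleVal (v i) T / w j := h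
        _ ≤ (α * bundleVal p T) / w j := by
            apply div_le_div_of_nonneg_right (hSle T) (hw j).le
        _ = α * (bundleVal p T / w j) := by ring
    exact lt_of_mul_lt_mul_left h1 hα.le
  obtain ⟨h1, h2, h3⟩ := henvy
  exact ⟨key _ _ (subset_refl _) h1,
    fun g hg => key _ _ (subset_refl _) (h2 g hg),
    fun c hc => key _ _ (Finset.erase_subset _ _) (h3 c hc)⟩
end

section
/- Let (A, p) be an integral market equilibrium for a fair division instance with additive valuations and positive entitlements. If (A, p) is pWEF1 (no agent pWEF1-envies another), then the allocation A is WEF1 and fractionally Pareto-optimal. -/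
open Finset

/-- `x` is a fractional allocation. -/
def FracAlloc {n : ℕ} {ι : Type*} [Fintype ι] (x : Fin n → ι → ℝ) : Prop :=
  (∀ i j, 0 ≤ x i j) ∧ (∀ j : ι, ∑ i, x i j = 1)

/-- Agent's value for a fractional bundle. -/
noncomputable def fracVal {ι : Type*} [Fintype ι] (v : ι → ℝ) (z : ι → ℝ) : ℝ :=
  ∑ j, v j * z j


private lemma key_div {a wi wj vS vT pS pT : ℝ} (ha : 0 < a) (hwi : 0 < wi) (hwj : 0 < wj)
    (hS : vS = a * pS) (hT : vT ≤ a * pT) (h : vS / wi < vT / wj) :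
    pS / wi < pT / wj := by
  rw [div_lt_div_iff₀ hwi hwj] at h ⊢
  nlinarith [mul_le_mul_of_nonneg_right hT hwi.le]

/-- If an integral market equilibrium `(A, p)` is pWEF1, then `A` is WEF1 and
fractionally Pareto-optimal. -/
theorem pwef1_implies_wef1_fPO
    {n : ℕ} {ι : Type*} [Fintype ι] [DecidableEq ι]
    (v : Fin n → ι → ℝ) (A : Fin n → Finset ι) (p : ι → ℝ)
    (w : Fin n → ℝ) (hw : ∀ i, 0 < w i)
    (hpart : ∀ j : ι, ∃! i, j ∈ A i)
    (hme : IntMarketEq v A p)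
    (hpwef1 : ∀ i j, i ≠ j → ¬ WEF1Envies p (w i) (w j) (A i) (A j)) :
    (∀ i j, i ≠ j → ¬ WEF1Envies (v i) (w i) (w j) (A i) (A j)) ∧
    ¬ ∃ y : Fin n → ι → ℝ, FracAlloc y ∧
        (∀ i, bundleVal (v i) (A i) ≤ fracVal (v i) (y i)) ∧
        (∃ i, bundleVal (v i) (A i) < fracVal (v i) (y i)) := by
  obtain ⟨hpg, hpc, hpn, hopt⟩ := hme
  constructor
  · rintro i j hij ⟨h1, h2, h3⟩
    obtain ⟨α, hα, hle, heq⟩ := hopt i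
    have hAeq : ∀ S : Finset ι, S ⊆ A i → bundleVal (v i) S = α * bundleVal p S := by
      intro S hS
      simp only [bundleVal, Finset.mul_sum]
      exact Finset.sum_congr rfl fun t ht => heq t (hS ht)
    have hAle : ∀ S : Finset ι, bundleVal (v i) S ≤ α * bundleVal p S := by
      intro S
      simp only [bundleVal, Finset.mul_sum]
      exact Finset.sum_le_sum fun t _ => hle t
    refine hpwef1 i j hij ⟨?_, ?_, ?_⟩
    · exact key_div hα (hw i) (hw j) (hAeq _ le_rfl) (hAle _) h1
    · intro g hg
      exact key_div hα (hw i) (hw j) (hAeq _ le_rfl) (hAle _) (h2 g hg)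
    · intro c hc
      exact key_div hα (hw i) (hw j) (hAeq _ (Finset.erase_subset c (A i))) (hAle _) (h3 c hc)
  · rintro ⟨y, ⟨hy0, hy1⟩, hdom, i0, hi0⟩
    have key : ∀ i, bundleVal p (A i) ≤ fracVal p (y i) ∧
        (bundleVal (v i) (A i) < fracVal (v i) (y i) →
          bundleVal p (A i) < fracVal p (y i)) := by
      intro i
      obtain ⟨α, hα, hle, heq⟩ := hopt i
      have hAeq : bundleVal (v i) (A i) = α * bundleVal p (A i) := by
        simp only [bundleVal, Finset.mul_sum]
        exact Finset.sum_congr rfl fun t ht => heq t ht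
      have hyle : fracVal (v i) (y i) ≤ α * fracVal p (y i) := by
        simp only [fracVal, Finset.mul_sum]
        refine Finset.sum_le_sum fun j _ => ?_
        have := mul_le_mul_of_nonneg_right (hle j) (hy0 i j)
        linarith [this]
      constructor
      · have h : α * bundleVal p (A i) ≤ α * fracVal p (y i) := by
          calc α * bundleVal p (A i) = bundleVal (v i) (A i) := hAeq.symm
          _ ≤ fracVal (v i) (y i) := hdom i
          _ ≤ α * fracVal p (y i) := hyle
        exact le_of_mul_le_mul_left h hα
      · intro hlt
        have h : α * bundleVal p (A i) < α * fracVal p (y i) := by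
          calc α * bundleVal p (A i) = bundleVal (v i) (A i) := hAeq.symm
          _ < fracVal (v i) (y i) := hlt
          _ ≤ α * fracVal p (y i) := hyle
        exact lt_of_mul_lt_mul_left h hα.le
    have hsumA : ∑ i, bundleVal p (A i) = ∑ j, p j := by
      have : ∀ i, bundleVal p (A i) = ∑ j : ι, if j ∈ A i then p j else 0 := by
        intro i
        rw [Finset.sum_ite_mem, Finset.univ_inter]
        rfl
      simp only [this]
      rw [Finset.sum_comm]
      refine Finset.sum_congr rfl fun j _ => ?_
      obtain ⟨i, hi, huniq⟩ := hpart j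
      rw [Fintype.sum_eq_single i fun b hb => if_neg fun h => hb (huniq b h)]
      exact if_pos hi
    have hsumY : ∑ i, fracVal p (y i) = ∑ j, p j := by
      simp only [fracVal]
      rw [Finset.sum_comm]
      refine Finset.sum_congr rfl fun j _ => ?_
      rw [← Finset.mul_sum, hy1 j, mul_one]
    have hlt : ∑ i, bundleVal p (A i) < ∑ i, fracVal p (y i) :=
      Finset.sum_lt_sum (fun i _ => (key i).1) ⟨i0, Finset.mem_univ i0, (key i0).2 hi0⟩
    linarith
end

section
/- Let ([n], [m], (v_i), w) be a fair division instance with additive valuations. Let A be a social-welfare-maximizing allocation, i.e., each item j is allocated to some agent in argmax_{i∈[n]} v_i(j), and define prices p by p_j := v_i(j) where i is the agent receiving j. Then (A, p) is a market equilibrium. -/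
open Finset

/-- A social-welfare-maximizing allocation (each item goes to an agent valuing
it the most), priced at the receiving agent's value, is a market equilibrium. -/
theorem socialWelfareMax_marketEq
    {n : ℕ} {ι : Type*} [Fintype ι]
    (v : Fin n → ι → ℝ) (f : ι → Fin n)
    (hf : ∀ (j : ι) (i : Fin n), v i j ≤ v (f j) j) :
    IntMarketEq v (fun i => Finset.univ.filter (fun j => f j = i))
      (fun j => v (f j) j) := by
  refine ⟨fun j ⟨i, hi⟩ => lt_of_lt_of_le hi (hf j i),
    fun j h => h _,
    fun j ⟨h1, i, hi⟩ => le_antisymm (h1 _) (hi ▸ hf j i),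
    fun i => ⟨1, one_pos, fun j => by simpa using hf j i, fun j hj => by
      simp only [mem_filter] at hj
      simp [hj.2]⟩⟩
end

section
/- Let (A, p) be an integral market equilibrium for a fair division instance with two agents, additive valuations, and positive entitlements w_1, w_2. Suppose p(A_1)/w_1 ≤ p(A_2)/w_2. Then agent 2 does not WEF1-envy agent 1 in A; consequently, if A is not WEF1, then agent 1 WEF1-envies agent 2. -/
open Finset

/-- In a two-agent integral market equilibrium, if agent 1's budget-per-weight
is at most agent 2's, then agent 2 does not WEF1-envy agent 1; hence if the
allocation is not WEF1, agent 1 WEF1-envies agent 2. -/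
theorem richer_agent_no_envy
    {ι : Type*} [Fintype ι] [DecidableEq ι]
    (v : Fin 2 → ι → ℝ) (A : Fin 2 → Finset ι) (p : ι → ℝ)
    (w : Fin 2 → ℝ) (hw : ∀ i, 0 < w i)
    (hpart : ∀ j : ι, ∃! i, j ∈ A i)
    (hme : IntMarketEq v A p)
    (hbudget : bundleVal p (A 0) / w 0 ≤ bundleVal p (A 1) / w 1) :
    ¬ WEF1Envies (v 1) (w 1) (w 0) (A 1) (A 0) ∧
    (¬ (∀ i j, i ≠ j → ¬ WEF1Envies (v i) (w i) (w j) (A i) (A j)) →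
      WEF1Envies (v 0) (w 0) (w 1) (A 0) (A 1)) := by
  obtain ⟨-, -, -, heq⟩ := hme
  obtain ⟨α, hα, hle, heqA⟩ := heq 1
  have h1 : bundleVal (v 1) (A 1) = α * bundleVal p (A 1) := by
    unfold bundleVal
    rw [Finset.mul_sum]
    exact Finset.sum_congr rfl heqA
  have h0 : bundleVal (v 1) (A 0) ≤ α * bundleVal p (A 0) := by
    unfold bundleVal
    rw [Finset.mul_sum]
    exact Finset.sum_le_sum fun j _ => hle j
  have hnoenvy : ¬ WEF1Envies (v 1) (w 1) (w 0) (A 1) (A 0) := by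
    rintro ⟨henv, -⟩
    have : bundleVal (v 1) (A 0) / w 0 ≤ bundleVal (v 1) (A 1) / w 1 := by
      calc bundleVal (v 1) (A 0) / w 0 ≤ α * bundleVal p (A 0) / w 0 := by
            exact div_le_div_of_nonneg_right h0 (hw 0).le
        _ = α * (bundleVal p (A 0) / w 0) := by ring
        _ ≤ α * (bundleVal p (A 1) / w 1) :=
            mul_le_mul_of_nonneg_left hbudget hα.le
        _ = bundleVal (v 1) (A 1) / w 1 := by rw [h1]; ring
    exact absurd henv (not_lt.mpr this)
  refine ⟨hnoenvy, fun h => ?_⟩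
  push_neg at h
  obtain ⟨i, j, hij, hW⟩ := h
  fin_cases i <;> fin_cases j <;> simp_all
end

section
/- Consider a fair division instance with two agents ℓ and b, additive valuations, and positive entitlements. Let (A, p) be an integral market equilibrium with best-bang-per-buck values α_ℓ, α_b > 0 (i.e., v_i(j) ≤ α_i·p_j for every item j, with equality for j ∈ A_i, for i ∈ {ℓ, b}). Suppose agent ℓ WEF1-envies agent b in A, and both A_ℓ and A_b contain at least one item that is a good or a chore. Let G be the set of goods and C the set of chores, and define β := max_{g ∈ A_b ∩ G} v_ℓ(g)/(α_ℓ·p_g) and γ := max_{c ∈ A_ℓ ∩ C} (α_b·p_c)/v_b(c), where the maximum over an empty set is −∞. Then ρ := max(β, γ) satisfies 0 < ρ ≤ 1, and (A, p̂) is a market equilibrium, where p̂_j := p_j/ρ for j ∈ A_ℓ and p̂_j := p_j for j ∈ A_b (with best-bang-per-buck values α_ℓ·ρ for ℓ and α_b for b). -/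
open Finset

/-- Item `j` is a good: some agent values it positively. -/
def IsGood {n : ℕ} {ι : Type*} (v : Fin n → ι → ℝ) (j : ι) : Prop := ∃ i, 0 < v i j

/-- Item `j` is a chore: every agent values it negatively. -/
def IsChore {n : ℕ} {ι : Type*} (v : Fin n → ι → ℝ) (j : ι) : Prop := ∀ i, v i j < 0

/-- Item `j` is neutral. -/
def IsNeutral {n : ℕ} {ι : Type*} (v : Fin n → ι → ℝ) (j : ι) : Prop :=
  (∀ i, v i j ≤ 0) ∧ (∃ i, v i j = 0)

set_option maxHeartbeats 1000000 in
open Classical in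
/-- Raising the prices of the envious agent `ℓ`'s items by the factor `1/ρ`,
where `ρ = max(β, γ) ∈ (0, 1]`, preserves market equilibrium
(with best-bang-per-buck values `αℓ·ρ` for `ℓ` and `αb` for `b`).
`Finset.max : Finset ℝ → WithBot ℝ` encodes "max over an empty set is `-∞`". -/
theorem price_raise_preserves_marketEq
    {ι : Type*} [Fintype ι] [DecidableEq ι]
    (v : Fin 2 → ι → ℝ) (A : Fin 2 → Finset ι) (p : ι → ℝ)
    (w : Fin 2 → ℝ) (hw : ∀ i, 0 < w i)
    (ℓ b : Fin 2) (hlb : ℓ ≠ b)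
    (hpart : ∀ j : ι, ∃! i, j ∈ A i)
    -- price sign conditions of the market equilibrium (A, p):
    (hpg : ∀ j : ι, IsGood v j → 0 < p j)
    (hpc : ∀ j : ι, IsChore v j → p j < 0)
    (hpn : ∀ j : ι, IsNeutral v j → p j = 0)
    -- best-bang-per-buck values:
    (αℓ αb : ℝ) (hαℓ : 0 < αℓ) (hαb : 0 < αb)
    (hbbℓ : ∀ j : ι, v ℓ j ≤ αℓ * p j) (hbbℓeq : ∀ j ∈ A ℓ, v ℓ j = αℓ * p j)
    (hbbb : ∀ j : ι, v b j ≤ αb * p j) (hbbbeq : ∀ j ∈ A b, v b j = αb * p j)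
    -- agent ℓ WEF1-envies agent b:
    (henvy : WEF1Envies (v ℓ) (w ℓ) (w b) (A ℓ) (A b))
    -- both bundles contain a good or a chore:
    (hl : ∃ j ∈ A ℓ, IsGood v j ∨ IsChore v j)
    (hb : ∃ j ∈ A b, IsGood v j ∨ IsChore v j) :
    let β : WithBot ℝ :=
      (((A b).filter (fun g => IsGood v g)).image (fun g => v ℓ g / (αℓ * p g))).max
    let γ : WithBot ℝ :=
      (((A ℓ).filter (fun c => IsChore v c)).image (fun c => αb * p c / v b c)).max
    ∃ ρ : ℝ, max β γ = (ρ : WithBot ℝ) ∧ 0 < ρ ∧ ρ ≤ 1 ∧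
      (let phat : ι → ℝ := fun j => if j ∈ A ℓ then p j / ρ else p j
       (∀ j : ι, IsGood v j → 0 < phat j) ∧
       (∀ j : ι, IsChore v j → phat j < 0) ∧
       (∀ j : ι, IsNeutral v j → phat j = 0) ∧
       (∀ j : ι, v ℓ j ≤ (αℓ * ρ) * phat j) ∧
       (∀ j ∈ A ℓ, v ℓ j = (αℓ * ρ) * phat j) ∧
       (∀ j : ι, v b j ≤ αb * phat j) ∧
       (∀ j ∈ A b, v b j = αb * phat j)) := by
  intro β γ
  -- basic structure facts
  have hmem : ∀ i : Fin 2, i = ℓ ∨ i = b := by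
    intro i
    have h1 := i.isLt; have h2 := ℓ.isLt; have h3 := b.isLt
    have h4 : (ℓ : ℕ) ≠ (b : ℕ) := fun h => hlb (Fin.ext h)
    have : (i : ℕ) = ℓ ∨ (i : ℕ) = b := by omega
    rcases this with h | h
    · exact Or.inl (Fin.ext h)
    · exact Or.inr (Fin.ext h)
  have hcover : ∀ j, j ∈ A ℓ ∨ j ∈ A b := by
    intro j
    obtain ⟨i, hi, -⟩ := hpart j
    rcases hmem i with rfl | rfl
    · exact Or.inl hi
    · exact Or.inr hi
  have hdisj : ∀ j, j ∈ A ℓ → j ∉ A b := by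
    intro j hjl hjb
    obtain ⟨i, -, huniq⟩ := hpart j
    exact hlb ((huniq ℓ hjl).trans (huniq b hjb).symm)
  have htri : ∀ j, IsGood v j ∨ IsChore v j ∨ IsNeutral v j := by
    intro j
    by_cases hg : IsGood v j
    · exact Or.inl hg
    by_cases hc : IsChore v j
    · exact Or.inr (Or.inl hc)
    simp only [IsGood, not_exists, not_lt] at hg
    simp only [IsChore, not_forall, not_lt] at hc
    obtain ⟨i, hi⟩ := hc
    exact Or.inr (Or.inr ⟨fun i => hg i, i, le_antisymm (hg i) hi⟩)
  -- key claim from envy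
  have hkey : (∃ g ∈ A b, IsGood v g ∧ 0 < v ℓ g) ∨ (∃ c ∈ A ℓ, IsChore v c) := by
    by_contra h
    push_neg at h
    obtain ⟨h1, h2⟩ := h
    have hA : 0 ≤ bundleVal (v ℓ) (A ℓ) := by
      apply Finset.sum_nonneg
      intro j hj
      rcases htri j with hg | hc | hn
      · rw [hbbℓeq j hj]; exact mul_nonneg hαℓ.le (hpg j hg).le
      · exact absurd hc (h2 j hj)
      · rw [hbbℓeq j hj, hpn j hn, mul_zero]
    have hB : bundleVal (v ℓ) (A b) ≤ 0 := by
      apply Finset.sum_nonpos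
      intro j hj
      rcases htri j with hg | hc | hn
      · exact h1 j hj hg
      · exact (hbbℓ j).trans (mul_neg_of_pos_of_neg hαℓ (hpc j hc)).le
      · have := hbbℓ j; rwa [hpn j hn, mul_zero] at this
    have h3 := henvy.1
    have l1 : 0 ≤ bundleVal (v ℓ) (A ℓ) / w ℓ := div_nonneg hA (hw ℓ).le
    have l2 : bundleVal (v ℓ) (A b) / w b ≤ 0 :=
      div_nonpos_of_nonpos_of_nonneg hB (hw b).le
    linarith
  set Sβ := ((A b).filter (fun g => IsGood v g)).image (fun g => v ℓ g / (αℓ * p g)) with hSβ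
  set Sγ := ((A ℓ).filter (fun c => IsChore v c)).image (fun c => αb * p c / v b c) with hSγ
  set T := Sβ ∪ Sγ with hT
  have hmaxT : max β γ = T.max := by
    rw [hT, Finset.max_union]
  -- a positive element of T
  have hpos : ∃ x ∈ T, 0 < x := by
    rcases hkey with ⟨g, hg, hgood, hvg⟩ | ⟨c, hc, hchore⟩
    · refine ⟨v ℓ g / (αℓ * p g), ?_, ?_⟩
      · exact Finset.mem_union_left _ (Finset.mem_image_of_mem _ (Finset.mem_filter.mpr ⟨hg, hgood⟩))
      · exact div_pos hvg (mul_pos hαℓ (hpg g hgood))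
    · refine ⟨αb * p c / v b c, ?_, ?_⟩
      · exact Finset.mem_union_right _ (Finset.mem_image_of_mem _ (Finset.mem_filter.mpr ⟨hc, hchore⟩))
      · exact div_pos_of_neg_of_neg (mul_neg_of_pos_of_neg hαb (hpc c hchore)) (hchore b)
  -- all elements of T are ≤ 1
  have hle1 : ∀ x ∈ T, x ≤ 1 := by
    intro x hx
    rcases Finset.mem_union.mp hx with hx | hx
    · obtain ⟨g, hg, rfl⟩ := Finset.mem_image.mp hx
      obtain ⟨hgb, hgood⟩ := Finset.mem_filter.mp hg
      exact div_le_one_iff.mpr (Or.inl ⟨mul_pos hαℓ (hpg g hgood), hbbℓ g⟩)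
    · obtain ⟨c, hc, rfl⟩ := Finset.mem_image.mp hx
      obtain ⟨hcl, hchore⟩ := Finset.mem_filter.mp hc
      exact div_le_one_iff.mpr (Or.inr (Or.inr ⟨hchore b, hbbb c⟩))
  obtain ⟨x, hxT, hx0⟩ := hpos
  obtain ⟨ρ, hρ⟩ := Finset.max_of_nonempty ⟨x, hxT⟩
  have hρT : ρ ∈ T := Finset.mem_of_max hρ
  have hρ1 : ρ ≤ 1 := hle1 ρ hρT
  have hρ0 : 0 < ρ := lt_of_lt_of_le hx0 (Finset.le_max_of_eq hxT hρ)
  have hρne : ρ ≠ 0 := ne_of_gt hρ0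
  -- the two bound facts
  have hbd1 : ∀ g ∈ A b, IsGood v g → v ℓ g / (αℓ * p g) ≤ ρ := by
    intro g hg hgood
    have hm : v ℓ g / (αℓ * p g) ∈ T :=
      Finset.mem_union_left _ (Finset.mem_image_of_mem _ (Finset.mem_filter.mpr ⟨hg, hgood⟩))
    exact Finset.le_max_of_eq hm hρ
  have hbd2 : ∀ c ∈ A ℓ, IsChore v c → αb * p c / v b c ≤ ρ := by
    intro c hc hchore
    have hm : αb * p c / v b c ∈ T :=
      Finset.mem_union_right _ (Finset.mem_image_of_mem _ (Finset.mem_filter.mpr ⟨hc, hchore⟩))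
    exact Finset.le_max_of_eq hm hρ
  refine ⟨ρ, by rw [hmaxT, hρ], hρ0, hρ1, ?_⟩
  intro phat
  have hphat : ∀ j, phat j = if j ∈ A ℓ then p j / ρ else p j := fun j => rfl
  refine ⟨?_, ?_, ?_, ?_, ?_, ?_, ?_⟩
  · intro j hj
    rw [hphat]
    split
    · exact div_pos (hpg j hj) hρ0
    · exact hpg j hj
  · intro j hj
    rw [hphat]
    split
    · exact div_neg_of_neg_of_pos (hpc j hj) hρ0
    · exact hpc j hj
  · intro j hj
    rw [hphat]
    split
    · rw [hpn j hj, zero_div]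
    · exact hpn j hj
  · intro j
    rw [hphat]
    split
    · next hjl =>
      rw [hbbℓeq j hjl]
      rw [show (αℓ * ρ) * (p j / ρ) = αℓ * p j by field_simp]
    · next hjl =>
      rcases htri j with hg | hc | hn
      · have hjb : j ∈ A b := (hcover j).resolve_left hjl
        have := hbd1 j hjb hg
        have hp : 0 < αℓ * p j := mul_pos hαℓ (hpg j hg)
        calc v ℓ j ≤ ρ * (αℓ * p j) := (div_le_iff₀ hp).mp this
          _ = (αℓ * ρ) * p j := by ring
      · have h1 := hbbℓ j
        have h2 := hpc j hc
        nlinarith [mul_nonneg (mul_nonneg hαℓ.le (sub_nonneg.mpr hρ1)) (neg_nonneg.mpr h2.le)]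
      · have h1 := hbbℓ j
        rw [hpn j hn] at h1 ⊢
        simpa using h1
  · intro j hjl
    rw [hphat, if_pos hjl, hbbℓeq j hjl]
    field_simp
  · intro j
    rw [hphat]
    split
    · next hjl =>
      rcases htri j with hg | hc | hn
      · have h1 := hbbb j
        have h2 := hpg j hg
        rw [← mul_div_assoc, le_div_iff₀ hρ0]
        rcases le_or_gt (v b j) 0 with hv | hv
        · nlinarith [mul_pos hαb h2, mul_nonneg (neg_nonneg.mpr hv) hρ0.le]
        · nlinarith
      · have := hbd2 j hjl hc
        have hvb : v b j < 0 := hc b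
        have h3 : ρ * v b j ≤ αb * p j := (div_le_iff_of_neg hvb).mp this
        rw [← mul_div_assoc, le_div_iff₀ hρ0]
        nlinarith
      · have h1 := hbbb j
        rw [hpn j hn] at h1 ⊢
        simpa using h1
    · exact hbbb j
  · intro j hjb
    have hjl : j ∉ A ℓ := fun h => hdisj j h hjb
    rw [hphat, if_neg hjl]
    exact hbbbeq j hjb
end

section
/- Every fair division instance with two agents, additive valuations, and positive entitlements admits an allocation that is both WEF1 and fractionally Pareto-optimal (fPO). -/
open Finset

namespace WEF1Aux

variable {ι : Type*} [Fintype ι] [DecidableEq ι]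

/-- Core separation lemma: if bundles are separated by a positive ratio ρ,
the two (weighted) envy relations cannot hold simultaneously. -/
lemma sep_not_both (v1 v2 : ι → ℝ) (ρ w1 w2 : ℝ) (hρ : 0 < ρ) (hw1 : 0 < w1) (hw2 : 0 < w2)
    (S1 S2 : Finset ι) (h1 : ∀ j ∈ S1, v2 j ≤ ρ * v1 j) (h2 : ∀ j ∈ S2, ρ * v1 j ≤ v2 j)
    (hg1 : bundleVal v1 S1 / w1 < bundleVal v1 S2 / w2) :
    bundleVal v2 S1 / w1 ≤ bundleVal v2 S2 / w2 := by
  have A : bundleVal v2 S1 ≤ ρ * bundleVal v1 S1 := by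
    rw [bundleVal, bundleVal, Finset.mul_sum]
    exact Finset.sum_le_sum h1
  have B : ρ * bundleVal v1 S2 ≤ bundleVal v2 S2 := by
    rw [bundleVal, bundleVal, Finset.mul_sum]
    exact Finset.sum_le_sum h2
  rw [div_lt_div_iff₀ hw1 hw2] at hg1
  rw [div_le_div_iff₀ hw1 hw2]
  calc bundleVal v2 S1 * w2 ≤ (ρ * bundleVal v1 S1) * w2 :=
        mul_le_mul_of_nonneg_right A hw2.le
    _ = ρ * (bundleVal v1 S1 * w2) := by ring
    _ ≤ ρ * (bundleVal v1 S2 * w1) := mul_le_mul_of_nonneg_left hg1.le hρ.le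
    _ = (ρ * bundleVal v1 S2) * w1 := by ring
    _ ≤ bundleVal v2 S2 * w1 := mul_le_mul_of_nonneg_right B hw1.le

/-- A ρ-separated allocation is fractionally Pareto optimal. -/
lemma sep_fPO (v : Fin 2 → ι → ℝ) (ρ : ℝ) (hρ : 0 < ρ) (B : Finset ι)
    (h1 : ∀ j ∈ B, v 1 j ≤ ρ * v 0 j) (h2 : ∀ j ∉ B, ρ * v 0 j ≤ v 1 j) :
    ¬ ∃ y : Fin 2 → ι → ℝ, FracAlloc y ∧
        (∀ i, bundleVal (v i) (![B, univ \ B] i) ≤ fracVal (v i) (y i)) ∧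
        (∃ i, bundleVal (v i) (![B, univ \ B] i) < fracVal (v i) (y i)) := by
  rintro ⟨y, ⟨hy0, hy1⟩, hdom, i, hstrict⟩
  have hinv : (0:ℝ) < ρ⁻¹ := inv_pos.2 hρ
  -- pointwise bound
  have point : ∀ j : ι, v 0 j * y 0 j + ρ⁻¹ * (v 1 j * y 1 j) ≤
      (if j ∈ B then v 0 j else ρ⁻¹ * v 1 j) := by
    intro j
    have hsum : y 0 j + y 1 j = 1 := by
      have := hy1 j; rwa [Fin.sum_univ_two] at this
    have h0 := hy0 0 j
    have h1' := hy0 1 j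
    by_cases hj : j ∈ B
    · have hle : ρ⁻¹ * v 1 j ≤ v 0 j := by
        rw [inv_mul_le_iff₀ hρ]
        have := h1 j hj; nlinarith
      simp only [hj, if_pos]
      calc v 0 j * y 0 j + ρ⁻¹ * (v 1 j * y 1 j)
          = v 0 j * y 0 j + (ρ⁻¹ * v 1 j) * y 1 j := by ring
        _ ≤ v 0 j * y 0 j + v 0 j * y 1 j :=
            add_le_add_right (mul_le_mul_of_nonneg_right hle h1') _
        _ = v 0 j * (y 0 j + y 1 j) := by ring
        _ = v 0 j := by rw [hsum, mul_one]
    · have hle : v 0 j ≤ ρ⁻¹ * v 1 j := by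
        rw [le_inv_mul_iff₀ hρ]
        exact h2 j hj
      simp only [hj, if_neg, if_false]
      calc v 0 j * y 0 j + ρ⁻¹ * (v 1 j * y 1 j)
          = v 0 j * y 0 j + (ρ⁻¹ * v 1 j) * y 1 j := by ring
        _ ≤ (ρ⁻¹ * v 1 j) * y 0 j + (ρ⁻¹ * v 1 j) * y 1 j :=
            add_le_add_left (mul_le_mul_of_nonneg_right hle h0) _
        _ = (ρ⁻¹ * v 1 j) * (y 0 j + y 1 j) := by ring
        _ = ρ⁻¹ * v 1 j := by rw [hsum, mul_one]
  have key : fracVal (v 0) (y 0) + ρ⁻¹ * fracVal (v 1) (y 1) ≤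
      bundleVal (v 0) B + ρ⁻¹ * bundleVal (v 1) (univ \ B) := by
    have lhs_eq : fracVal (v 0) (y 0) + ρ⁻¹ * fracVal (v 1) (y 1) =
        ∑ j : ι, (v 0 j * y 0 j + ρ⁻¹ * (v 1 j * y 1 j)) := by
      rw [fracVal, fracVal, Finset.mul_sum, ← Finset.sum_add_distrib]
    have rhs_eq : bundleVal (v 0) B + ρ⁻¹ * bundleVal (v 1) (univ \ B) =
        ∑ j : ι, (if j ∈ B then v 0 j else ρ⁻¹ * v 1 j) := by
      rw [← Finset.sum_add_sum_compl B (fun j => if j ∈ B then v 0 j else ρ⁻¹ * v 1 j)]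
      congr 1
      · rw [bundleVal]
        exact (Finset.sum_congr rfl (fun j hj => by simp [hj])).symm
      · rw [bundleVal, Finset.mul_sum, Finset.compl_eq_univ_sdiff]
        refine (Finset.sum_congr rfl (fun j hj => ?_)).symm
        have : j ∉ B := (Finset.mem_sdiff.1 hj).2
        simp [this]
    rw [lhs_eq, rhs_eq]
    exact Finset.sum_le_sum (fun j _ => point j)
  have hd0 : bundleVal (v 0) B ≤ fracVal (v 0) (y 0) := by simpa using hdom 0
  have hd1 : bundleVal (v 1) (univ \ B) ≤ fracVal (v 1) (y 1) := by simpa using hdom 1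
  have hd1' : ρ⁻¹ * bundleVal (v 1) (univ \ B) ≤ ρ⁻¹ * fracVal (v 1) (y 1) :=
    mul_le_mul_of_nonneg_left hd1 hinv.le
  fin_cases i
  · have hstrict' : bundleVal (v 0) B < fracVal (v 0) (y 0) := by
      simpa using hstrict
    linarith
  · have hstrict' : bundleVal (v 1) (univ \ B) < fracVal (v 1) (y 1) := by
      simpa using hstrict
    have := mul_lt_mul_of_pos_left hstrict' hinv
    linarith

section Sweep

variable (v1 v2 : ι → ℝ)

/-- Ratio key. -/
noncomputable def keyR (j : ι) : ℝ := v2 j / v1 j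

/-- The set of "sweep" items (both values positive, or both negative). -/
noncomputable def sweepP : Finset ι :=
  univ.filter (fun j => (0 < v1 j ∧ 0 < v2 j) ∨ (v1 j < 0 ∧ v2 j < 0))

/-- Sweep items sorted by ratio key. -/
noncomputable def lst : List ι :=
  List.insertionSort (fun a b => keyR v1 v2 a ≤ keyR v1 v2 b) (sweepP v1 v2).toList

lemma lst_sorted : (lst v1 v2).Pairwise (fun a b => keyR v1 v2 a ≤ keyR v1 v2 b) := by
  haveI : IsTotal ι (fun a b => keyR v1 v2 a ≤ keyR v1 v2 b) := ⟨fun a b => le_total _ _⟩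
  haveI : IsTrans ι (fun a b => keyR v1 v2 a ≤ keyR v1 v2 b) := ⟨fun a b c => le_trans⟩
  exact List.pairwise_insertionSort _ _

lemma lst_nodup : (lst v1 v2).Nodup :=
  (List.perm_insertionSort _ _).symm.nodup (Finset.nodup_toList _)

lemma mem_lst {j : ι} :
    j ∈ lst v1 v2 ↔ ((0 < v1 j ∧ 0 < v2 j) ∨ (v1 j < 0 ∧ v2 j < 0)) := by
  rw [lst, (List.perm_insertionSort _ _).mem_iff, Finset.mem_toList, sweepP, mem_filter]
  simp

lemma keyR_pos {j : ι} (hj : j ∈ lst v1 v2) : 0 < keyR v1 v2 j := by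
  rcases (mem_lst v1 v2).1 hj with ⟨h1, h2⟩ | ⟨h1, h2⟩
  · exact div_pos h2 h1
  · exact div_pos_of_neg_of_neg h2 h1

/-- Rank of an item in the sorted list. -/
noncomputable def rk (j : ι) : ℕ := (lst v1 v2).idxOf j

lemma key_mono {i i' : ℕ} (hi : i < (lst v1 v2).length) (hi' : i' < (lst v1 v2).length)
    (h : i ≤ i') :
    keyR v1 v2 ((lst v1 v2).get ⟨i, hi⟩) ≤ keyR v1 v2 ((lst v1 v2).get ⟨i', hi'⟩) := by
  rcases h.lt_or_eq with h | h
  · exact (lst_sorted v1 v2).rel_get_of_lt (by exact h)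
  · subst h; exact le_rfl

lemma rk_get {k : ℕ} (hk : k < (lst v1 v2).length) :
    rk v1 v2 ((lst v1 v2).get ⟨k, hk⟩) = k := by
  have hmem : (lst v1 v2).get ⟨k, hk⟩ ∈ lst v1 v2 := List.get_mem _ _
  have hlt : rk v1 v2 ((lst v1 v2).get ⟨k, hk⟩) < (lst v1 v2).length :=
    List.idxOf_lt_length_iff.2 hmem
  have := List.idxOf_get (a := (lst v1 v2).get ⟨k, hk⟩) (l := lst v1 v2) hlt
  have h2 := ((lst_nodup v1 v2).get_inj_iff).1 this
  exact congrArg Fin.val h2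

lemma rk_lt_length {j : ι} (hj : j ∈ lst v1 v2) : rk v1 v2 j < (lst v1 v2).length :=
  List.idxOf_lt_length_iff.2 hj

lemma get_rk {j : ι} (hj : j ∈ lst v1 v2) :
    (lst v1 v2).get ⟨rk v1 v2 j, rk_lt_length v1 v2 hj⟩ = j :=
  List.idxOf_get _

/-- Stage-`k` bundle of agent 0. -/
noncomputable def stage (k : ℕ) : Finset ι :=
  univ.filter (fun j =>
    (0 ≤ v1 j ∧ v2 j ≤ 0) ∨
    (0 < v1 j ∧ 0 < v2 j ∧ rk v1 v2 j < k) ∨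
    (v1 j < 0 ∧ v2 j < 0 ∧ k ≤ rk v1 v2 j))

lemma mem_stage {k : ℕ} {j : ι} :
    j ∈ stage v1 v2 k ↔
      (0 ≤ v1 j ∧ v2 j ≤ 0) ∨
      (0 < v1 j ∧ 0 < v2 j ∧ rk v1 v2 j < k) ∨
      (v1 j < 0 ∧ v2 j < 0 ∧ k ≤ rk v1 v2 j) := by
  rw [stage, mem_filter]; simp

/-- Signs of an item not in stage k, when it is not a sweep item. -/
lemma not_mem_stage_signs {k : ℕ} {j : ι} (hj : j ∉ stage v1 v2 k)
    (hns : j ∉ lst v1 v2) : v1 j ≤ 0 ∧ 0 ≤ v2 j := by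
  rw [mem_stage] at hj
  rw [mem_lst] at hns
  constructor
  · by_contra h
    push_neg at h
    rcases lt_or_ge 0 (v2 j) with h2 | h2
    · exact hns (Or.inl ⟨h, h2⟩)
    · exact hj (Or.inl ⟨h.le, h2⟩)
  · by_contra h
    push_neg at h
    rcases lt_or_ge (v1 j) 0 with h1 | h1
    · exact hns (Or.inr ⟨h1, h⟩)
    · exact hj (Or.inl ⟨h1, h.le⟩)

/-- The separating ratio for stage `k`. -/
noncomputable def rhok (k : ℕ) : ℝ :=
  if h : (lst v1 v2).length = 0 then 1
  else keyR v1 v2 ((lst v1 v2).get ⟨min k ((lst v1 v2).length - 1), by omega⟩)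

lemma rhok_pos (k : ℕ) : 0 < rhok v1 v2 k := by
  rw [rhok]
  split
  · exact one_pos
  · exact keyR_pos v1 v2 (List.get_mem _ _)

lemma key_le_rhok {k : ℕ} {j : ι} (hj : j ∈ lst v1 v2) (h : rk v1 v2 j < k) :
    keyR v1 v2 j ≤ rhok v1 v2 k := by
  have hlt := rk_lt_length v1 v2 hj
  rw [rhok, dif_neg (by omega)]
  calc keyR v1 v2 j
      = keyR v1 v2 ((lst v1 v2).get ⟨rk v1 v2 j, hlt⟩) := by rw [get_rk v1 v2 hj]
    _ ≤ _ := key_mono v1 v2 _ _ (by omega)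

lemma rhok_le_key {k : ℕ} {j : ι} (hj : j ∈ lst v1 v2) (h : k ≤ rk v1 v2 j) :
    rhok v1 v2 k ≤ keyR v1 v2 j := by
  have hlt := rk_lt_length v1 v2 hj
  rw [rhok, dif_neg (by omega)]
  calc keyR v1 v2 ((lst v1 v2).get ⟨min k ((lst v1 v2).length - 1), by omega⟩)
      ≤ keyR v1 v2 ((lst v1 v2).get ⟨rk v1 v2 j, hlt⟩) :=
        key_mono v1 v2 _ _ (by omega)
    _ = keyR v1 v2 j := by rw [get_rk v1 v2 hj]

lemma stage_sep_mem {k : ℕ} {j : ι} (hj : j ∈ stage v1 v2 k) :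
    v2 j ≤ rhok v1 v2 k * v1 j := by
  rcases (mem_stage v1 v2).1 hj with ⟨h1, h2⟩ | ⟨h1, h2, h3⟩ | ⟨h1, h2, h3⟩
  · exact h2.trans (mul_nonneg (rhok_pos v1 v2 k).le h1)
  · have hjl : j ∈ lst v1 v2 := (mem_lst v1 v2).2 (Or.inl ⟨h1, h2⟩)
    have := key_le_rhok v1 v2 hjl h3
    rw [keyR, div_le_iff₀ h1] at this
    linarith [this]
  · have hjl : j ∈ lst v1 v2 := (mem_lst v1 v2).2 (Or.inr ⟨h1, h2⟩)
    have := rhok_le_key v1 v2 hjl h3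
    rw [keyR, le_div_iff_of_neg h1] at this
    linarith [this]

lemma stage_sep_not_mem {k : ℕ} {j : ι} (hj : j ∉ stage v1 v2 k) :
    rhok v1 v2 k * v1 j ≤ v2 j := by
  by_cases hjl : j ∈ lst v1 v2
  · rcases (mem_lst v1 v2).1 hjl with ⟨h1, h2⟩ | ⟨h1, h2⟩
    · have h3 : k ≤ rk v1 v2 j := by
        by_contra h3
        push_neg at h3
        exact hj ((mem_stage v1 v2).2 (Or.inr (Or.inl ⟨h1, h2, h3⟩)))
      have := rhok_le_key v1 v2 hjl h3
      rw [keyR, le_div_iff₀ h1] at this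
      linarith [this]
    · have h3 : rk v1 v2 j < k := by
        by_contra h3
        push_neg at h3
        exact hj ((mem_stage v1 v2).2 (Or.inr (Or.inr ⟨h1, h2, h3⟩)))
      have := key_le_rhok v1 v2 hjl h3
      rw [keyR, div_le_iff_of_neg h1] at this
      linarith [this]
  · obtain ⟨h1, h2⟩ := not_mem_stage_signs v1 v2 hj hjl
    calc rhok v1 v2 k * v1 j ≤ 0 := mul_nonpos_of_nonneg_of_nonpos (rhok_pos v1 v2 k).le h1
      _ ≤ v2 j := h2

lemma stage_succ_good {k : ℕ} (hk : k < (lst v1 v2).length)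
    (hx : 0 < v1 ((lst v1 v2).get ⟨k, hk⟩)) :
    (lst v1 v2).get ⟨k, hk⟩ ∉ stage v1 v2 k ∧
    stage v1 v2 (k + 1) = insert ((lst v1 v2).get ⟨k, hk⟩) (stage v1 v2 k) := by
  set x := (lst v1 v2).get ⟨k, hk⟩ with hxdef
  have hxl : x ∈ lst v1 v2 := List.get_mem _ _
  have hx2 : 0 < v2 x := by
    rcases (mem_lst v1 v2).1 hxl with ⟨h1, h2⟩ | ⟨h1, h2⟩
    · exact h2
    · exact absurd hx (not_lt.2 h1.le)
  have hrk : rk v1 v2 x = k := rk_get v1 v2 hk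
  have hxnot : x ∉ stage v1 v2 k := by
    rw [mem_stage]
    rintro (⟨h1, h2⟩ | ⟨h1, h2, h3⟩ | ⟨h1, h2, h3⟩)
    · exact absurd hx2 (not_lt.2 h2)
    · omega
    · exact absurd hx (not_lt.2 h1.le)
  refine ⟨hxnot, ?_⟩
  ext j
  rw [Finset.mem_insert, mem_stage, mem_stage]
  by_cases hjx : j = x
  · subst hjx
    simp only [true_or, iff_true]
    exact Or.inr (Or.inl ⟨hx, hx2, by omega⟩)
  · have hrkj : j ∈ lst v1 v2 → rk v1 v2 j ≠ k := by
      intro hjl h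
      apply hjx
      have : (lst v1 v2).get ⟨rk v1 v2 j, rk_lt_length v1 v2 hjl⟩ = j := get_rk v1 v2 hjl
      rw [← this]
      congr 1
      exact Fin.ext h
    constructor
    · rintro (h | ⟨h1, h2, h3⟩ | ⟨h1, h2, h3⟩)
      · exact Or.inr (Or.inl h)
      · have := hrkj ((mem_lst v1 v2).2 (Or.inl ⟨h1, h2⟩))
        exact Or.inr (Or.inr (Or.inl ⟨h1, h2, by omega⟩))
      · exact Or.inr (Or.inr (Or.inr ⟨h1, h2, by omega⟩))
    · rintro (h | h | ⟨h1, h2, h3⟩ | ⟨h1, h2, h3⟩)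
      · exact absurd h hjx
      · exact Or.inl h
      · exact Or.inr (Or.inl ⟨h1, h2, by omega⟩)
      · have := hrkj ((mem_lst v1 v2).2 (Or.inr ⟨h1, h2⟩))
        exact Or.inr (Or.inr ⟨h1, h2, by omega⟩)

lemma stage_succ_chore {k : ℕ} (hk : k < (lst v1 v2).length)
    (hx : v1 ((lst v1 v2).get ⟨k, hk⟩) < 0) :
    (lst v1 v2).get ⟨k, hk⟩ ∈ stage v1 v2 k ∧
    stage v1 v2 (k + 1) = (stage v1 v2 k).erase ((lst v1 v2).get ⟨k, hk⟩) := by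
  set x := (lst v1 v2).get ⟨k, hk⟩ with hxdef
  have hxl : x ∈ lst v1 v2 := List.get_mem _ _
  have hx2 : v2 x < 0 := by
    rcases (mem_lst v1 v2).1 hxl with ⟨h1, h2⟩ | ⟨h1, h2⟩
    · exact absurd h1 (not_lt.2 hx.le)
    · exact h2
  have hrk : rk v1 v2 x = k := rk_get v1 v2 hk
  have hxmem : x ∈ stage v1 v2 k :=
    (mem_stage v1 v2).2 (Or.inr (Or.inr ⟨hx, hx2, by omega⟩))
  refine ⟨hxmem, ?_⟩
  ext j
  rw [Finset.mem_erase, mem_stage, mem_stage]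
  by_cases hjx : j = x
  · subst hjx
    simp only [ne_eq, not_true_eq_false, false_and, iff_false]
    rintro (⟨h1, h2⟩ | ⟨h1, h2, h3⟩ | ⟨h1, h2, h3⟩)
    · exact absurd h1 (not_le.2 hx)
    · exact absurd h1 (not_lt.2 hx.le)
    · omega
  · have hrkj : j ∈ lst v1 v2 → rk v1 v2 j ≠ k := by
      intro hjl h
      apply hjx
      have : (lst v1 v2).get ⟨rk v1 v2 j, rk_lt_length v1 v2 hjl⟩ = j := get_rk v1 v2 hjl
      rw [← this]
      congr 1
      exact Fin.ext h
    simp only [ne_eq, hjx, not_false_eq_true, true_and]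
    constructor
    · rintro (h | ⟨h1, h2, h3⟩ | ⟨h1, h2, h3⟩)
      · exact Or.inl h
      · have := hrkj ((mem_lst v1 v2).2 (Or.inl ⟨h1, h2⟩))
        exact Or.inr (Or.inl ⟨h1, h2, by omega⟩)
      · exact Or.inr (Or.inr ⟨h1, h2, by omega⟩)
    · rintro (h | ⟨h1, h2, h3⟩ | ⟨h1, h2, h3⟩)
      · exact Or.inl h
      · exact Or.inr (Or.inl ⟨h1, h2, by omega⟩)
      · have := hrkj ((mem_lst v1 v2).2 (Or.inr ⟨h1, h2⟩))
        exact Or.inr (Or.inr ⟨h1, h2, by omega⟩)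

lemma stage_succ_large {k : ℕ} (hk : (lst v1 v2).length ≤ k) :
    stage v1 v2 (k + 1) = stage v1 v2 k := by
  ext j
  rw [mem_stage, mem_stage]
  by_cases hjl : j ∈ lst v1 v2
  · have := rk_lt_length v1 v2 hjl
    constructor
    · rintro (h | ⟨h1, h2, h3⟩ | ⟨h1, h2, h3⟩)
      · exact Or.inl h
      · exact Or.inr (Or.inl ⟨h1, h2, by omega⟩)
      · omega
    · rintro (h | ⟨h1, h2, h3⟩ | ⟨h1, h2, h3⟩)
      · exact Or.inl h
      · exact Or.inr (Or.inl ⟨h1, h2, by omega⟩)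
      · omega
  · rw [mem_lst] at hjl
    push_neg at hjl
    constructor
    · rintro (h | ⟨h1, h2, h3⟩ | ⟨h1, h2, h3⟩)
      · exact Or.inl h
      · exact absurd h2 (not_lt.2 (hjl.1 h1))
      · exact absurd h2 (not_lt.2 (hjl.2 h1))
    · rintro (h | ⟨h1, h2, h3⟩ | ⟨h1, h2, h3⟩)
      · exact Or.inl h
      · exact absurd h2 (not_lt.2 (hjl.1 h1))
      · exact absurd h2 (not_lt.2 (hjl.2 h1))

/-- Agent values along the sweep are monotone (both `v1` and `v2` of the stage bundle
increase). -/
lemma stage_val_mono (k : ℕ) :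
    bundleVal v1 (stage v1 v2 k) ≤ bundleVal v1 (stage v1 v2 (k + 1)) ∧
    bundleVal v2 (stage v1 v2 k) ≤ bundleVal v2 (stage v1 v2 (k + 1)) := by
  by_cases hk : k < (lst v1 v2).length
  · set x := (lst v1 v2).get ⟨k, hk⟩ with hxdef
    have hxl : x ∈ lst v1 v2 := List.get_mem _ _
    rcases (mem_lst v1 v2).1 hxl with ⟨h1, h2⟩ | ⟨h1, h2⟩
    · obtain ⟨hnot, heq⟩ := stage_succ_good v1 v2 hk h1
      rw [heq]
      rw [bundleVal, bundleVal, bundleVal, bundleVal, Finset.sum_insert hnot,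
        Finset.sum_insert hnot]
      constructor <;> linarith
    · obtain ⟨hmem, heq⟩ := stage_succ_chore v1 v2 hk h1
      rw [heq]
      rw [bundleVal, bundleVal, bundleVal, bundleVal,
        Finset.sum_erase_eq_sub hmem, Finset.sum_erase_eq_sub hmem]
      constructor <;> linarith
  · rw [stage_succ_large v1 v2 (not_lt.1 hk)]
    exact ⟨le_rfl, le_rfl⟩

lemma stage_val_mono_le {k k' : ℕ} (h : k ≤ k') :
    bundleVal v1 (stage v1 v2 k) ≤ bundleVal v1 (stage v1 v2 k') ∧
    bundleVal v2 (stage v1 v2 k) ≤ bundleVal v2 (stage v1 v2 k') := by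
  induction k', h using Nat.le_induction with
  | base => exact ⟨le_rfl, le_rfl⟩
  | succ n hn ih =>
      obtain ⟨a, b⟩ := ih
      obtain ⟨a', b'⟩ := stage_val_mono v1 v2 n
      exact ⟨a.trans a', b.trans b'⟩

lemma stage_zero_signs {j : ι} :
    (j ∈ stage v1 v2 0 → v2 j ≤ 0) ∧ (j ∉ stage v1 v2 0 → 0 ≤ v2 j) := by
  constructor
  · intro hj
    rcases (mem_stage v1 v2).1 hj with ⟨h1, h2⟩ | ⟨h1, h2, h3⟩ | ⟨h1, h2, h3⟩
    · exact h2
    · omega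
    · exact h2.le
  · intro hj
    by_contra h
    push_neg at h
    rcases lt_or_ge (v1 j) 0 with h1 | h1
    · exact hj ((mem_stage v1 v2).2 (Or.inr (Or.inr ⟨h1, h, by omega⟩)))
    · exact hj ((mem_stage v1 v2).2 (Or.inl ⟨h1, h.le⟩))

lemma stage_len_signs {j : ι} :
    (j ∈ stage v1 v2 (lst v1 v2).length → 0 ≤ v1 j) ∧
    (j ∉ stage v1 v2 (lst v1 v2).length → v1 j ≤ 0) := by
  constructor
  · intro hj
    rcases (mem_stage v1 v2).1 hj with ⟨h1, h2⟩ | ⟨h1, h2, h3⟩ | ⟨h1, h2, h3⟩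
    · exact h1
    · exact h1.le
    · have : j ∈ lst v1 v2 := (mem_lst v1 v2).2 (Or.inr ⟨h1, h2⟩)
      have := rk_lt_length v1 v2 this
      omega
  · intro hj
    by_contra h
    push_neg at h
    rcases lt_or_ge 0 (v2 j) with h2 | h2
    · have hjl : j ∈ lst v1 v2 := (mem_lst v1 v2).2 (Or.inl ⟨h, h2⟩)
      have := rk_lt_length v1 v2 hjl
      exact hj ((mem_stage v1 v2).2 (Or.inr (Or.inl ⟨h, h2, this⟩)))
    · exact hj ((mem_stage v1 v2).2 (Or.inl ⟨h.le, h2⟩))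

end Sweep

end WEF1Aux

namespace WEF1Aux

/-- Packaging helper: from a ρ-separated bundle `B` and the two no-WEF1-envy facts,
produce the full conclusion. -/
lemma build {ι : Type*} [Fintype ι] [DecidableEq ι]
    (v : Fin 2 → ι → ℝ) (w : Fin 2 → ℝ) (B : Finset ι) (ρ : ℝ) (hρ : 0 < ρ)
    (h1 : ∀ j ∈ B, v 1 j ≤ ρ * v 0 j) (h2 : ∀ j ∉ B, ρ * v 0 j ≤ v 1 j)
    (hno01 : ¬ WEF1Envies (v 0) (w 0) (w 1) B (univ \ B))
    (hno10 : ¬ WEF1Envies (v 1) (w 1) (w 0) (univ \ B) B) :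
    ∃ A : Fin 2 → Finset ι,
      (∀ j : ι, ∃! i, j ∈ A i) ∧
      (∀ i j, i ≠ j → ¬ WEF1Envies (v i) (w i) (w j) (A i) (A j)) ∧
      ¬ ∃ y : Fin 2 → ι → ℝ, FracAlloc y ∧
          (∀ i, bundleVal (v i) (A i) ≤ fracVal (v i) (y i)) ∧
          (∃ i, bundleVal (v i) (A i) < fracVal (v i) (y i)) := by
  refine ⟨![B, univ \ B], ?_, ?_, sep_fPO v ρ hρ B h1 h2⟩
  · intro j
    by_cases hj : j ∈ B
    · refine ⟨0, by simpa using hj, ?_⟩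
      intro i hi
      fin_cases i
      · rfl
      · exfalso
        have : j ∉ B := by simpa using hi
        exact this hj
    · refine ⟨1, by simp [hj], ?_⟩
      intro i hi
      fin_cases i
      · exfalso
        have : j ∈ B := by simpa using hi
        exact hj this
      · rfl
  · intro i j hij
    fin_cases i <;> fin_cases j
    · exact absurd rfl hij
    · simpa using hno01
    · simpa using hno10
    · exact absurd rfl hij

end WEF1Aux

/-- Every two-agent fair division instance with additive valuations and
positive entitlements admits an allocation that is WEF1 and fractionally
Pareto-optimal. -/
theorem wef1_fPO_exists_two_agents
    {ι : Type*} [Fintype ι] [DecidableEq ι]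
    (v : Fin 2 → ι → ℝ) (w : Fin 2 → ℝ) (hw : ∀ i, 0 < w i) :
    ∃ A : Fin 2 → Finset ι,
      (∀ j : ι, ∃! i, j ∈ A i) ∧
      (∀ i j, i ≠ j → ¬ WEF1Envies (v i) (w i) (w j) (A i) (A j)) ∧
      ¬ ∃ y : Fin 2 → ι → ℝ, FracAlloc y ∧
          (∀ i, bundleVal (v i) (A i) ≤ fracVal (v i) (y i)) ∧
          (∃ i, bundleVal (v i) (A i) < fracVal (v i) (y i)) := by
  classical
  open WEF1Aux in
  have hw0 : (0:ℝ) < w 0 := hw 0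
  have hw1 : (0:ℝ) < w 1 := hw 1
  set v1 : ι → ℝ := v 0 with hv1def
  set v2 : ι → ℝ := v 1 with hv2def
  set m : ℕ := (WEF1Aux.lst v1 v2).length with hmdef
  -- the selection set
  set S : Finset ℕ := (Finset.range (m + 1)).filter
    (fun k => bundleVal v2 (WEF1Aux.stage v1 v2 k) / w 0 ≤
      bundleVal v2 (univ \ WEF1Aux.stage v1 v2 k) / w 1) with hSdef
  have h0S : 0 ∈ S := by
    rw [hSdef, Finset.mem_filter]
    refine ⟨Finset.mem_range.2 (by omega), ?_⟩
    have hB0 : bundleVal v2 (WEF1Aux.stage v1 v2 0) ≤ 0 :=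
      Finset.sum_nonpos (fun j hj => (WEF1Aux.stage_zero_signs v1 v2).1 hj)
    have hC0 : 0 ≤ bundleVal v2 (univ \ WEF1Aux.stage v1 v2 0) :=
      Finset.sum_nonneg (fun j hj => (WEF1Aux.stage_zero_signs v1 v2).2 (Finset.mem_sdiff.1 hj).2)
    rw [div_le_div_iff₀ hw0 hw1]
    nlinarith
  set k2 : ℕ := S.max' ⟨0, h0S⟩ with hk2def
  have hk2S : k2 ∈ S := S.max'_mem _
  rw [hSdef, Finset.mem_filter] at hk2S
  have hk2le : k2 ≤ m := by have := Finset.mem_range.1 hk2S.1; omega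
  have hg2k2 : bundleVal v2 (WEF1Aux.stage v1 v2 k2) / w 0 ≤
      bundleVal v2 (univ \ WEF1Aux.stage v1 v2 k2) / w 1 := hk2S.2
  by_cases hg1 : bundleVal v1 (univ \ WEF1Aux.stage v1 v2 k2) / w 1 ≤
      bundleVal v1 (WEF1Aux.stage v1 v2 k2) / w 0
  · exact WEF1Aux.build v w _ _ (WEF1Aux.rhok_pos v1 v2 k2)
      (fun j hj => WEF1Aux.stage_sep_mem v1 v2 hj)
      (fun j hj => WEF1Aux.stage_sep_not_mem v1 v2 hj)
      (fun h => absurd h.1 (not_lt.2 hg1))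
      (fun h => absurd h.1 (not_lt.2 hg2k2))
  · push_neg at hg1
    -- k2 < m
    have hk2m : k2 < m := by
      rcases lt_or_eq_of_le hk2le with h | h
      · exact h
      · exfalso
        have hBm : 0 ≤ bundleVal v1 (WEF1Aux.stage v1 v2 m) :=
          Finset.sum_nonneg (fun j hj => (WEF1Aux.stage_len_signs v1 v2).1 hj)
        have hCm : bundleVal v1 (univ \ WEF1Aux.stage v1 v2 m) ≤ 0 :=
          Finset.sum_nonpos (fun j hj =>
            (WEF1Aux.stage_len_signs v1 v2).2 (Finset.mem_sdiff.1 hj).2)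
        rw [h, div_lt_div_iff₀ hw0 hw1] at hg1
        nlinarith
    have hg2succ : bundleVal v2 (univ \ WEF1Aux.stage v1 v2 (k2 + 1)) / w 1 <
        bundleVal v2 (WEF1Aux.stage v1 v2 (k2 + 1)) / w 0 := by
      by_contra h
      push_neg at h
      have hmem : k2 + 1 ∈ S := by
        rw [hSdef, Finset.mem_filter]
        exact ⟨Finset.mem_range.2 (by omega), h⟩
      have := S.le_max' _ hmem
      omega
    have hg1succ : bundleVal v1 (univ \ WEF1Aux.stage v1 v2 (k2 + 1)) / w 1 ≤
        bundleVal v1 (WEF1Aux.stage v1 v2 (k2 + 1)) / w 0 := by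
      by_contra h
      push_neg at h
      have := WEF1Aux.sep_not_both v1 v2 (WEF1Aux.rhok v1 v2 (k2 + 1)) (w 0) (w 1)
        (WEF1Aux.rhok_pos v1 v2 (k2 + 1)) hw0 hw1
        (WEF1Aux.stage v1 v2 (k2 + 1)) (univ \ WEF1Aux.stage v1 v2 (k2 + 1))
        (fun j hj => WEF1Aux.stage_sep_mem v1 v2 hj)
        (fun j hj => WEF1Aux.stage_sep_not_mem v1 v2 (Finset.mem_sdiff.1 hj).2) h
      linarith
    set x : ι := (WEF1Aux.lst v1 v2).get ⟨k2, hk2m⟩ with hxdef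
    have hxl : x ∈ WEF1Aux.lst v1 v2 := List.get_mem _ _
    rcases (WEF1Aux.mem_lst v1 v2).1 hxl with ⟨hx1, hx2⟩ | ⟨hx1, hx2⟩
    · -- x is a good
      obtain ⟨hxnot, hins⟩ := WEF1Aux.stage_succ_good v1 v2 hk2m hx1
      rw [← hxdef] at hxnot hins
      have hCsucc : univ \ WEF1Aux.stage v1 v2 (k2 + 1) =
          (univ \ WEF1Aux.stage v1 v2 k2).erase x := by
        rw [hins]
        ext j
        simp only [Finset.mem_sdiff, Finset.mem_univ, true_and, Finset.mem_erase,
          Finset.mem_insert, ne_eq]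
        tauto
      by_cases hc : bundleVal v1 (WEF1Aux.stage v1 v2 k2) / w 0 <
          bundleVal v1 ((univ \ WEF1Aux.stage v1 v2 k2).erase x) / w 1
      · -- use stage k2+1
        have hv2le := WEF1Aux.sep_not_both v1 v2 (WEF1Aux.rhok v1 v2 k2) (w 0) (w 1)
          (WEF1Aux.rhok_pos v1 v2 k2) hw0 hw1
          (WEF1Aux.stage v1 v2 k2) ((univ \ WEF1Aux.stage v1 v2 k2).erase x)
          (fun j hj => WEF1Aux.stage_sep_mem v1 v2 hj)
          (fun j hj => WEF1Aux.stage_sep_not_mem v1 v2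
            (Finset.mem_sdiff.1 (Finset.erase_subset _ _ hj)).2) hc
        refine WEF1Aux.build v w (WEF1Aux.stage v1 v2 (k2 + 1)) _
          (WEF1Aux.rhok_pos v1 v2 (k2 + 1))
          (fun j hj => WEF1Aux.stage_sep_mem v1 v2 hj)
          (fun j hj => WEF1Aux.stage_sep_not_mem v1 v2 hj)
          (fun h => absurd h.1 (not_lt.2 hg1succ))
          (fun h => ?_)
        have hxB : x ∈ WEF1Aux.stage v1 v2 (k2 + 1) := by
          rw [hins]; exact Finset.mem_insert_self _ _
        have h2x := h.2.1 x hxB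
        rw [hCsucc, hins, Finset.erase_insert hxnot] at h2x
        linarith
      · -- use stage k2
        push_neg at hc
        refine WEF1Aux.build v w (WEF1Aux.stage v1 v2 k2) _
          (WEF1Aux.rhok_pos v1 v2 k2)
          (fun j hj => WEF1Aux.stage_sep_mem v1 v2 hj)
          (fun j hj => WEF1Aux.stage_sep_not_mem v1 v2 hj)
          (fun h => ?_)
          (fun h => absurd h.1 (not_lt.2 hg2k2))
        have hxC : x ∈ univ \ WEF1Aux.stage v1 v2 k2 :=
          Finset.mem_sdiff.2 ⟨Finset.mem_univ _, hxnot⟩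
        have h2x := h.2.1 x hxC
        exact absurd h2x (not_lt.2 hc)
    · -- x is a chore
      obtain ⟨hxmem, hers⟩ := WEF1Aux.stage_succ_chore v1 v2 hk2m hx1
      rw [← hxdef] at hxmem hers
      have hxnotC : x ∉ univ \ WEF1Aux.stage v1 v2 k2 := by
        rw [Finset.mem_sdiff]
        tauto
      have hCsucc : univ \ WEF1Aux.stage v1 v2 (k2 + 1) =
          insert x (univ \ WEF1Aux.stage v1 v2 k2) := by
        rw [hers]
        ext j
        simp only [Finset.mem_sdiff, Finset.mem_univ, true_and, Finset.mem_erase,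
          Finset.mem_insert, ne_eq]
        by_cases hjx : j = x
        · subst hjx; simp
        · simp [hjx]
      by_cases hc : bundleVal v1 ((WEF1Aux.stage v1 v2 k2).erase x) / w 0 <
          bundleVal v1 (univ \ WEF1Aux.stage v1 v2 k2) / w 1
      · -- use stage k2+1
        have hv2le := WEF1Aux.sep_not_both v1 v2 (WEF1Aux.rhok v1 v2 k2) (w 0) (w 1)
          (WEF1Aux.rhok_pos v1 v2 k2) hw0 hw1
          ((WEF1Aux.stage v1 v2 k2).erase x) (univ \ WEF1Aux.stage v1 v2 k2)
          (fun j hj => WEF1Aux.stage_sep_mem v1 v2 (Finset.erase_subset _ _ hj))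
          (fun j hj => WEF1Aux.stage_sep_not_mem v1 v2 (Finset.mem_sdiff.1 hj).2) hc
        refine WEF1Aux.build v w (WEF1Aux.stage v1 v2 (k2 + 1)) _
          (WEF1Aux.rhok_pos v1 v2 (k2 + 1))
          (fun j hj => WEF1Aux.stage_sep_mem v1 v2 hj)
          (fun j hj => WEF1Aux.stage_sep_not_mem v1 v2 hj)
          (fun h => absurd h.1 (not_lt.2 hg1succ))
          (fun h => ?_)
        have hxC : x ∈ univ \ WEF1Aux.stage v1 v2 (k2 + 1) := by
          rw [hCsucc]; exact Finset.mem_insert_self _ _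
        have h3x := h.2.2 x hxC
        rw [hCsucc, Finset.erase_insert hxnotC, hers] at h3x
        linarith
      · -- use stage k2
        push_neg at hc
        refine WEF1Aux.build v w (WEF1Aux.stage v1 v2 k2) _
          (WEF1Aux.rhok_pos v1 v2 k2)
          (fun j hj => WEF1Aux.stage_sep_mem v1 v2 hj)
          (fun j hj => WEF1Aux.stage_sep_not_mem v1 v2 hj)
          (fun h => ?_)
          (fun h => absurd h.1 (not_lt.2 hg2k2))
        have h3x := h.2.2 x hxmem
        exact absurd h3x (not_lt.2 hc)
end
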